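/- Let a : ℕ → ℝ satisfy a n ≥ 0 for all n ≥ 1, and let T n = √(a 1 + √(a 2 + ⋯ + √(a n))) denote the n-th approximant of the continued square root. Then the sequence (T n) converges to a finite limit if and only if there exists a constant C such that Real.log (a n) ≤ C * 2^n for all n ≥ 1 (i.e., limsup (log a n)/2^n < ∞). -/

import Mathlib

open Filter Real

/-- Backward-recurrence approximant of the continued square root:
`csqrtAppr a k n = √(a k + √(a (k+1) + ⋯ + √(a n)))`, with `csqrtAppr a k n = 0` for `k > n`. -/
noncomputable def csqrtAppr (a : ℕ → ℝ) (k n : ℕ) : ℝ :=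
  if h : k > n then 0 else Real.sqrt (a k + csqrtAppr a (k + 1) n)
termination_by n + 1 - k
decreasing_by omega

theorem csqrt_nonneg (a : ℕ → ℝ) (k n : ℕ) : 0 ≤ csqrtAppr a k n := by
  rw [csqrtAppr]
  split
  · exact le_refl 0
  · exact Real.sqrt_nonneg _

theorem csqrt_mono (a : ℕ → ℝ) (k n m : ℕ) (h : n ≤ m) :
    csqrtAppr a k n ≤ csqrtAppr a k m := by
  by_cases hm : k > m
  · have hn : k > n := lt_of_le_of_lt h hm
    rw [csqrtAppr, dif_pos hn, csqrtAppr, dif_pos hm]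
  · by_cases hn : k > n
    · conv_lhs => rw [csqrtAppr]
      rw [dif_pos hn]
      exact csqrt_nonneg a k m
    · conv_lhs => rw [csqrtAppr]
      conv_rhs => rw [csqrtAppr]
      rw [dif_neg hn, dif_neg hm]
      exact Real.sqrt_le_sqrt (add_le_add (le_refl _) (csqrt_mono a (k + 1) n m h))
termination_by m + 1 - k
decreasing_by omega

theorem csqrt_le (a : ℕ → ℝ) (K : ℝ) (hK : 1 ≤ K)
    (ha : ∀ j, 1 ≤ j → a j ≤ K ^ (2 ^ j)) (k n : ℕ) (hk : 1 ≤ k) :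
    csqrtAppr a k n ≤ 2 * K ^ (2 ^ k) := by
  have hK0 : (0:ℝ) ≤ K := le_trans zero_le_one hK
  rw [csqrtAppr]
  split
  · positivity
  · have h1 : csqrtAppr a (k + 1) n ≤ 2 * K ^ (2 ^ (k + 1)) :=
      csqrt_le a K hK ha (k + 1) n (by omega)
    have hle : K ^ (2 ^ k) ≤ K ^ (2 ^ (k + 1)) :=
      pow_le_pow_right₀ hK (Nat.pow_le_pow_right (by norm_num) (by omega))
    have h2 : a k + csqrtAppr a (k + 1) n ≤ (2 * K ^ (2 ^ k)) ^ 2 := by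
      have hsq : (2 * K ^ (2 ^ k)) ^ 2 = 4 * K ^ (2 ^ (k + 1)) := by
        rw [mul_pow, ← pow_mul, ← pow_succ]
        norm_num
      rw [hsq]
      have hak : a k ≤ K ^ (2 ^ (k + 1)) := le_trans (ha k hk) hle
      nlinarith [one_le_pow₀ hK (n := 2 ^ (k + 1))]
    calc Real.sqrt (a k + csqrtAppr a (k + 1) n)
        ≤ Real.sqrt ((2 * K ^ (2 ^ k)) ^ 2) := Real.sqrt_le_sqrt h2
      _ = 2 * K ^ (2 ^ k) := Real.sqrt_sq (by positivity)
termination_by n + 1 - k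
decreasing_by omega

theorem csqrt_sq (a : ℕ → ℝ) (ha : ∀ n, 1 ≤ n → 0 ≤ a n) (k n : ℕ)
    (hk : 1 ≤ k) (hkn : k ≤ n) :
    (csqrtAppr a k n) ^ 2 = a k + csqrtAppr a (k + 1) n := by
  rw [csqrtAppr, dif_neg (by omega)]
  exact Real.sq_sqrt (add_nonneg (ha k hk) (csqrt_nonneg a (k + 1) n))

theorem csqrt_chain (a : ℕ → ℝ) (ha : ∀ n, 1 ≤ n → 0 ≤ a n) (n : ℕ) :
    ∀ k, 1 ≤ k → k ≤ n → csqrtAppr a k n ≤ (csqrtAppr a 1 n) ^ (2 ^ (k - 1)) := by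
  intro k
  induction k with
  | zero => intro h; omega
  | succ k ih =>
    intro _ hkn
    rcases Nat.eq_zero_or_pos k with hk0 | hk1
    · subst hk0; simp
    · have hk : csqrtAppr a k n ≤ (csqrtAppr a 1 n) ^ (2 ^ (k - 1)) :=
        ih hk1 (by omega)
      have hsq : (csqrtAppr a k n) ^ 2 = a k + csqrtAppr a (k + 1) n :=
        csqrt_sq a ha k n hk1 (by omega)
      have h1 : csqrtAppr a (k + 1) n ≤ (csqrtAppr a k n) ^ 2 := by
        rw [hsq]
        have := ha k hk1
        linarith
      have h2 : (csqrtAppr a k n) ^ 2 ≤ ((csqrtAppr a 1 n) ^ (2 ^ (k - 1))) ^ 2 :=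
        pow_le_pow_left₀ (csqrt_nonneg a k n) hk 2
      have h3 : ((csqrtAppr a 1 n) ^ (2 ^ (k - 1))) ^ 2 = (csqrtAppr a 1 n) ^ (2 ^ k) := by
        rw [← pow_mul, ← pow_succ]
        have hh : k - 1 + 1 = k := by omega
        rw [hh]
      have : k + 1 - 1 = k := by omega
      rw [this]
      calc csqrtAppr a (k + 1) n ≤ (csqrtAppr a k n) ^ 2 := h1
        _ ≤ ((csqrtAppr a 1 n) ^ (2 ^ (k - 1))) ^ 2 := h2
        _ = (csqrtAppr a 1 n) ^ (2 ^ k) := h3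

/-- Vijayaraghavan's convergence criterion (Hardy, Seshu Aiyar, Wilson 1927):
for nonnegative terms, the continued square root converges iff
`limsup (log (a n)) / 2^n < ∞`. -/
theorem continued_sqrt_converges_iff (a : ℕ → ℝ) (ha : ∀ n, 1 ≤ n → 0 ≤ a n) :
    (∃ L : ℝ, Tendsto (fun n => csqrtAppr a 1 n) atTop (nhds L)) ↔
      (∃ C : ℝ, ∀ n, 1 ≤ n → Real.log (a n) ≤ C * 2 ^ n) := by
  constructor
  · rintro ⟨L, hL⟩
    have hmono : Monotone (fun n => csqrtAppr a 1 n) :=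
      fun n m h => csqrt_mono a 1 n m h
    have hTL : ∀ n, csqrtAppr a 1 n ≤ L := fun n => hmono.ge_of_tendsto hL n
    set M : ℝ := max L 1 with hM
    have hM1 : (1:ℝ) ≤ M := le_max_right _ _
    have hM0 : (0:ℝ) ≤ M := le_trans zero_le_one hM1
    refine ⟨Real.log M, fun n hn => ?_⟩
    have han : a n ≤ M ^ (2 ^ n) := by
      have hzero : csqrtAppr a (n + 1) n = 0 := by
        rw [csqrtAppr, dif_pos (by omega)]
      have hsq : (csqrtAppr a n n) ^ 2 = a n := by
        rw [csqrt_sq a ha n n hn le_rfl, hzero, add_zero]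
      have hch : csqrtAppr a n n ≤ (csqrtAppr a 1 n) ^ (2 ^ (n - 1)) :=
        csqrt_chain a ha n n hn le_rfl
      have hT1M : csqrtAppr a 1 n ≤ M := le_trans (hTL n) (le_max_left _ _)
      have h1 : (csqrtAppr a 1 n) ^ (2 ^ (n - 1)) ≤ M ^ (2 ^ (n - 1)) :=
        pow_le_pow_left₀ (csqrt_nonneg a 1 n) hT1M _
      have h2 : a n ≤ (M ^ (2 ^ (n - 1))) ^ 2 := by
        rw [← hsq]
        exact pow_le_pow_left₀ (csqrt_nonneg a n n) (le_trans hch h1) 2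
      have h3 : (M ^ (2 ^ (n - 1))) ^ 2 = M ^ (2 ^ n) := by
        rw [← pow_mul, ← pow_succ]
        have hh : n - 1 + 1 = n := by omega
        rw [hh]
      linarith [h2, h3.le, h3.ge]
    rcases eq_or_lt_of_le (ha n hn) with h0 | h0
    · rw [← h0, Real.log_zero]
      have : (0:ℝ) ≤ Real.log M := Real.log_nonneg hM1
      positivity
    · have := Real.log_le_log h0 han
      rw [Real.log_pow] at this
      calc Real.log (a n) ≤ (2 ^ n : ℕ) * Real.log M := this
        _ = Real.log M * 2 ^ n := by push_cast; ring
  · rintro ⟨C, hC⟩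
    set K : ℝ := max (Real.exp C) 1 with hKdef
    have hK : (1:ℝ) ≤ K := le_max_right _ _
    have ha' : ∀ j, 1 ≤ j → a j ≤ K ^ (2 ^ j) := by
      intro j hj
      have hexp : a j ≤ (Real.exp C) ^ (2 ^ j) := by
        rcases eq_or_lt_of_le (ha j hj) with h0 | h0
        · rw [← h0]; positivity
        · have h1 : a j = Real.exp (Real.log (a j)) := (Real.exp_log h0).symm
          rw [h1]
          have h2 : Real.log (a j) ≤ C * 2 ^ j := hC j hj
          calc Real.exp (Real.log (a j)) ≤ Real.exp (C * 2 ^ j) :=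
                Real.exp_le_exp.mpr h2
            _ = (Real.exp C) ^ (2 ^ j) := by
                rw [← Real.exp_nat_mul]
                congr 1
                push_cast
                ring
      exact le_trans hexp (pow_le_pow_left₀ (Real.exp_nonneg C) (le_max_left _ _) _)
    have hbd : ∀ n, csqrtAppr a 1 n ≤ 2 * K ^ (2 ^ 1) :=
      fun n => csqrt_le a K hK ha' 1 n le_rfl
    have hmono : Monotone (fun n => csqrtAppr a 1 n) :=
      fun n m h => csqrt_mono a 1 n m h
    have hbdd : BddAbove (Set.range fun n => csqrtAppr a 1 n) :=
      ⟨2 * K ^ (2 ^ 1), by rintro x ⟨n, rfl⟩; exact hbd n⟩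
    exact ⟨_, tendsto_atTop_ciSup hmono hbdd⟩
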